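/- For continuous F, G : [0,∞) → ℂ with |F(s)| ≤ A·e^{νs}/(M₀(1+s²)) and |G(s)| ≤ B·e^{νs}/(M₀(1+s²)), and any integer j ≥ 0, one has |∫₀^q s^j F(s) G(q−s) ds| ≤ q^j · A·B·e^{νq}/(M₀(1+q²)) for all q ≥ 0. -/

import Mathlib

open MeasureTheory Real Set

lemma conv_integral (q : ℝ) (hq : 0 < q) :
    ∫ s in (0:ℝ)..q, 1 / ((1 + s ^ 2) * (1 + (q - s) ^ 2)) =
      2 * (Real.log (1 + q ^ 2) + q * Real.arctan q) / (q * (q ^ 2 + 4)) := by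
  have hq4 : q ^ 2 + 4 ≠ 0 := by positivity
  set H : ℝ → ℝ := fun s => (1 / (q ^ 2 + 4)) *
      ((1 / q) * Real.log (1 + s ^ 2) + Real.arctan s
        - (1 / q) * Real.log (1 + (q - s) ^ 2) - Real.arctan (q - s)) with hH
  have hderiv : ∀ s : ℝ, HasDerivAt H (1 / ((1 + s ^ 2) * (1 + (q - s) ^ 2))) s := by
    intro s
    have h1s : (0:ℝ) < 1 + s ^ 2 := by positivity
    have h1qs : (0:ℝ) < 1 + (q - s) ^ 2 := by positivity
    have d1 : HasDerivAt (fun s : ℝ => 1 + s ^ 2) (2 * s) s := by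
      simpa using ((hasDerivAt_pow 2 s).const_add 1)
    have d2 : HasDerivAt (fun s : ℝ => Real.log (1 + s ^ 2)) (2 * s / (1 + s ^ 2)) s :=
      d1.log h1s.ne'
    have d3 : HasDerivAt (fun s : ℝ => q - s) (-1) s := by
      simpa using ((hasDerivAt_id s).const_sub q)
    have d4 : HasDerivAt (fun s : ℝ => 1 + (q - s) ^ 2) (2 * (q - s) * (-1)) s := by
      have := ((hasDerivAt_pow 2 (q - s)).comp s d3).const_add 1
      simpa [Function.comp] using this
    have d5 : HasDerivAt (fun s : ℝ => Real.log (1 + (q - s) ^ 2))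
        (2 * (q - s) * (-1) / (1 + (q - s) ^ 2)) s := d4.log h1qs.ne'
    have d6 : HasDerivAt (fun s : ℝ => Real.arctan (q - s))
        (1 / (1 + (q - s) ^ 2) * (-1)) s :=
      (Real.hasDerivAt_arctan (q - s)).comp s d3
    have d7 := ((((d2.const_mul (1 / q)).add (Real.hasDerivAt_arctan s)).sub
        (d5.const_mul (1 / q))).sub d6).const_mul (1 / (q ^ 2 + 4))
    refine d7.congr_deriv ?_
    field_simp
    ring
  have hcont : Continuous fun s : ℝ => 1 / ((1 + s ^ 2) * (1 + (q - s) ^ 2)) := by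
    apply Continuous.div continuous_const
    · fun_prop
    · intro s; positivity
  have := intervalIntegral.integral_eq_sub_of_hasDerivAt
    (fun s _ => hderiv s) (hcont.intervalIntegrable 0 q)
  rw [this, hH]
  simp only [sub_zero, sub_self]
  rw [Real.arctan_zero]
  field_simp
  simp only [ne_eq, OfNat.ofNat_ne_zero, not_false_eq_true, zero_pow, add_zero, Real.log_one, mul_zero]
  ring

/-- The constant `M₀ = sup_{s>0} 2(1+s²)(ln(1+s²)+s arctan s)/(s(s²+4))`. -/
noncomputable def M0 : ℝ :=
  sSup ((fun s : ℝ =>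
      2 * (1 + s ^ 2) * (Real.log (1 + s ^ 2) + s * Real.arctan s) / (s * (s ^ 2 + 4))) ''
    Set.Ioi 0)

lemma M0_bdd : BddAbove ((fun s : ℝ =>
      2 * (1 + s ^ 2) * (Real.log (1 + s ^ 2) + s * Real.arctan s) / (s * (s ^ 2 + 4))) ''
    Set.Ioi 0) := by
  refine ⟨4 + π, ?_⟩
  rintro x ⟨q, hq, rfl⟩
  simp only [Set.mem_Ioi] at hq
  have hlog : Real.log (1 + q ^ 2) ≤ 2 * q := by
    calc Real.log (1 + q ^ 2) ≤ Real.log ((1 + q) ^ 2) := by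
          apply Real.log_le_log (by positivity); nlinarith
      _ = 2 * Real.log (1 + q) := by
          rw [Real.log_pow]; ring
      _ ≤ 2 * q := by
          have := Real.log_le_sub_one_of_pos (x := 1 + q) (by linarith)
          linarith
  have harc : Real.arctan q ≤ π / 2 := (Real.arctan_lt_pi_div_two q).le
  have hpi : (3:ℝ) < π := by linarith [Real.pi_gt_three]
  rw [div_le_iff₀ (by positivity)]
  nlinarith [sq_nonneg q, mul_pos hq hq, sq_nonneg (q - 1),
    mul_le_mul_of_nonneg_left harc hq.le]

lemma M0_pos : 0 < M0 := by
  have h1 : (2 * (1 + (1:ℝ) ^ 2) * (Real.log (1 + 1 ^ 2) + 1 * Real.arctan 1) / (1 * (1 ^ 2 + 4))) ∈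
      ((fun s : ℝ =>
      2 * (1 + s ^ 2) * (Real.log (1 + s ^ 2) + s * Real.arctan s) / (s * (s ^ 2 + 4))) ''
    Set.Ioi 0) := ⟨1, by norm_num, rfl⟩
  have h2 := le_csSup M0_bdd h1
  have hlog : 0 < Real.log 2 := Real.log_pos (by norm_num)
  have harc : Real.arctan 1 = π / 4 := Real.arctan_one
  have : (0:ℝ) < 2 * (1 + 1 ^ 2) * (Real.log (1 + 1 ^ 2) + 1 * Real.arctan 1) / (1 * (1 ^ 2 + 4)) := by
    rw [harc]
    norm_num
    positivity
  exact lt_of_lt_of_le this h2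

theorem stmt_3 (j : ℕ) (ν A B : ℝ) (hν : 0 < ν) (hA : 0 ≤ A) (hB : 0 ≤ B)
    (F G : ℝ → ℂ) (hFc : ContinuousOn F (Set.Ici 0)) (hGc : ContinuousOn G (Set.Ici 0))
    (hF : ∀ s, 0 ≤ s → ‖F s‖ ≤ A * Real.exp (ν * s) / (M0 * (1 + s ^ 2)))
    (hG : ∀ s, 0 ≤ s → ‖G s‖ ≤ B * Real.exp (ν * s) / (M0 * (1 + s ^ 2))) :
    ∀ q, 0 ≤ q →
      ‖∫ s in (0:ℝ)..q, (s : ℂ) ^ j * F s * G (q - s)‖ ≤ q ^ j * A * B * Real.exp (ν * q) / (M0 * (1 + q ^ 2)) := by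
  intro q hq0
  have hM := M0_pos
  rcases hq0.eq_or_lt with h0 | hq
  · rw [← h0]
    simp only [intervalIntegral.integral_same, norm_zero]
    exact div_nonneg (by positivity) (mul_nonneg hM.le (by positivity))
  · -- q > 0
    set C : ℝ := A * B * Real.exp (ν * q) / M0 ^ 2 with hC
    have hCnn : 0 ≤ C := by positivity
    have hbd : ‖∫ s in (0:ℝ)..q, (s : ℂ) ^ j * F s * G (q - s)‖ ≤
        |∫ s in (0:ℝ)..q, q ^ j * C * (1 / ((1 + s ^ 2) * (1 + (q - s) ^ 2)))| := by
      apply intervalIntegral.norm_integral_le_abs_of_norm_le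
      · filter_upwards [ae_restrict_mem measurableSet_uIoc] with t ht
        rw [Set.uIoc_of_le hq0] at ht
        obtain ⟨ht0, htq⟩ := ht
        have htq' : (0:ℝ) ≤ q - t := by linarith
        have e1 := hF t ht0.le
        have e2 := hG (q - t) htq'
        have hden1 : (0:ℝ) ≤ M0 * (1 + t ^ 2) := mul_nonneg hM.le (by positivity)
        have hexp : Real.exp (ν * t) * Real.exp (ν * (q - t)) = Real.exp (ν * q) := by
          rw [← Real.exp_add]; ring_nf
        calc ‖(t : ℂ) ^ j * F t * G (q - t)‖
            = |t| ^ j * ‖F t‖ * ‖G (q - t)‖ := by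
              rw [norm_mul, norm_mul, norm_pow, Complex.norm_real, Real.norm_eq_abs]
          _ ≤ q ^ j * (A * Real.exp (ν * t) / (M0 * (1 + t ^ 2))) *
              (B * Real.exp (ν * (q - t)) / (M0 * (1 + (q - t) ^ 2))) := by
              apply mul_le_mul
              · apply mul_le_mul _ e1 (norm_nonneg _) (by positivity)
                rw [abs_of_nonneg ht0.le]
                exact pow_le_pow_left₀ ht0.le htq j
              · exact e2
              · exact norm_nonneg _
              · exact mul_nonneg (by positivity) (div_nonneg (by positivity) hden1)
          _ = q ^ j * C * (1 / ((1 + t ^ 2) * (1 + (q - t) ^ 2))) := by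
              rw [hC, ← hexp]
              field_simp
      · apply Continuous.intervalIntegrable
        apply Continuous.mul continuous_const
        apply Continuous.div continuous_const
        · fun_prop
        · intro s; positivity
    refine hbd.trans ?_
    rw [intervalIntegral.integral_const_mul, conv_integral q hq]
    have hlog : 0 ≤ Real.log (1 + q ^ 2) := Real.log_nonneg (by nlinarith)
    have harc : 0 ≤ Real.arctan q := by rw [← Real.arctan_zero]; exact Real.arctan_strictMono.monotone hq0
    have hNnn : 0 ≤ 2 * (Real.log (1 + q ^ 2) + q * Real.arctan q) / (q * (q ^ 2 + 4)) := by
      apply div_nonneg (by positivity) (by positivity)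
    rw [abs_of_nonneg (mul_nonneg (by positivity) hNnn)]
    have hsup : 2 * (1 + q ^ 2) * (Real.log (1 + q ^ 2) + q * Real.arctan q) / (q * (q ^ 2 + 4)) ≤ M0 :=
      le_csSup M0_bdd ⟨q, hq, rfl⟩
    have hfq : 2 * (Real.log (1 + q ^ 2) + q * Real.arctan q) / (q * (q ^ 2 + 4)) ≤ M0 / (1 + q ^ 2) := by
      rw [div_le_div_iff₀ (by positivity) (by positivity)]
      rw [div_le_iff₀ (by positivity)] at hsup
      nlinarith [hsup]
    calc q ^ j * C * (2 * (Real.log (1 + q ^ 2) + q * Real.arctan q) / (q * (q ^ 2 + 4)))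
        ≤ q ^ j * C * (M0 / (1 + q ^ 2)) := by
          apply mul_le_mul_of_nonneg_left hfq (by positivity)
      _ = q ^ j * A * B * Real.exp (ν * q) / (M0 * (1 + q ^ 2)) := by
          rw [hC]; field_simp
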